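/- Let {κⱼ}_{j≥1} be complex numbers and let H ∈ 𝔐 be the Hessenberg–Toeplitz matrix with H(i+1, i) = 1 for all i ∈ ℕ, H(i, i+j) = κ_{j+1} for all i, j ∈ ℕ, and all other entries 0. Then, in the noncommutative probability space (𝔐, φ) with φ(M) = M(0,0), the j-th free cumulant of the law of H equals κⱼ for every j ≥ 1. Equivalently, letting g(z) = Σ_{n≥0} φ(Hⁿ)/z^{n+1} be the Stieltjes transform of the law of H, the identity 1 = (z − κ₁)g − Σ_{j≥2} κⱼ gʲ holds in ℂ((1/z)). -/

import Mathlib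

/-- `z ∈ ℂ((1/z))`, modeled as the Laurent series field in `T = 1/z`. -/
noncomputable def zL : LaurentSeries ℂ := HahnSeries.single (-1) 1

/-- Powers of a column-finite `ℕ×ℕ` complex matrix (entrywise, with finite sums). -/
noncomputable def matPow (M : ℕ → ℕ → ℂ) : ℕ → ℕ → ℕ → ℂ
  | 0 => fun i j => if i = j then 1 else 0
  | (n + 1) => fun i j => ∑ᶠ k, matPow M n i k * M k j

/-- The Hessenberg–Toeplitz matrix with subdiagonal `1`'s and `H(i, i+j) = κ_{j+1}`. -/
noncomputable def hessToep (κ : ℕ → ℂ) (i j : ℕ) : ℂ :=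
  if i = j + 1 then 1 else if i ≤ j then κ (j - i + 1) else 0

namespace HTaux

open PowerSeries Finset

variable (κ : ℕ → ℂ)

/-- `a n k = (H^n)(0,k)`. -/
noncomputable def a (n k : ℕ) : ℂ := matPow (hessToep κ) n 0 k

/-- Generating function of the `k`-th column entries. -/
noncomputable def G (k : ℕ) : PowerSeries ℂ := PowerSeries.mk fun n => a κ n k

/-- `g = X * G 0`, the (shifted) moment generating function. -/
noncomputable def g : PowerSeries ℂ := X * G κ 0

lemma hess_high {k j : ℕ} (h : j + 1 < k) : hessToep κ k j = 0 := by
  unfold hessToep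
  rw [if_neg (by omega), if_neg (by omega)]

lemma a_zero (k : ℕ) : a κ 0 k = if (0 : ℕ) = k then 1 else 0 := rfl

lemma a_succ (n j : ℕ) :
    a κ (n + 1) j = a κ n (j + 1) + ∑ k ∈ range (j + 1), κ (j - k + 1) * a κ n k := by
  have h0 : a κ (n + 1) j = ∑ᶠ k, a κ n k * hessToep κ k j := rfl
  rw [h0, finsum_eq_sum_of_support_subset (s := range (j + 2)) _ (by
    intro k hk
    simp only [Function.mem_support] at hk
    simp only [coe_range, Set.mem_Iio]
    by_contra hmem
    exact hk (by rw [hess_high κ (by omega), mul_zero]))]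
  rw [Finset.sum_range_succ]
  have h1 : hessToep κ (j + 1) j = 1 := by unfold hessToep; rw [if_pos rfl]
  rw [h1, mul_one, add_comm]
  congr 1
  refine Finset.sum_congr rfl fun k hk => ?_
  simp only [mem_range] at hk
  have h2 : hessToep κ k j = κ (j - k + 1) := by
    unfold hessToep; rw [if_neg (by omega), if_pos (by omega)]
  rw [h2, mul_comm]

lemma G_rec (j : ℕ) :
    G κ j = C (if j = 0 then 1 else 0) + X * G κ (j + 1)
      + X * ∑ k ∈ range (j + 1), C (κ (j - k + 1)) * G κ k := by
  ext n
  cases n with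
  | zero =>
    simp only [G, coeff_mk, map_add, coeff_zero_eq_constantCoeff, map_mul, constantCoeff_X,
      zero_mul, add_zero, constantCoeff_C, a_zero]
    simp [eq_comm]
  | succ n =>
    rw [map_add, map_add, coeff_C, if_neg (Nat.succ_ne_zero n), coeff_succ_X_mul,
      coeff_succ_X_mul, map_sum]
    simp only [coeff_C_mul, G, coeff_mk]
    rw [a_succ, zero_add]

lemma X_dvd_g : (X : PowerSeries ℂ) ∣ g κ := ⟨G κ 0, rfl⟩

lemma X_pow_dvd_g_pow (j : ℕ) : (X : PowerSeries ℂ) ^ j ∣ g κ ^ j :=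
  pow_dvd_pow_of_dvd (X_dvd_g κ) j

lemma coeff_g_pow_eq_zero {j n : ℕ} (h : n < j) : coeff n (g κ ^ j) = 0 :=
  PowerSeries.X_pow_dvd_iff.mp (X_pow_dvd_g_pow κ j) n h

/-- Finite truncation of `Σ_r κ_{r+1} g^r`. -/
noncomputable def Kser (N : ℕ) : PowerSeries ℂ :=
  ∑ r ∈ range (N + 1), C (κ (r + 1)) * g κ ^ r

/-- Finite truncation of `Σ_k G_k g^k`. -/
noncomputable def Sser (N : ℕ) : PowerSeries ℂ :=
  ∑ k ∈ range (N + 1), G κ k * g κ ^ k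

lemma stepA (N : ℕ) :
    Sser κ N = 1 + X * (∑ k ∈ range (N + 1), G κ (k + 1) * g κ ^ k)
      + X * (∑ k ∈ range (N + 1), ∑ r ∈ range (k + 1),
          C (κ (k - r + 1)) * G κ r * g κ ^ k) := by
  unfold Sser
  have h : ∀ k ∈ range (N + 1), G κ k * g κ ^ k
      = (C (if k = 0 then 1 else 0)) * g κ ^ k
        + X * (G κ (k + 1) * g κ ^ k)
        + X * ∑ r ∈ range (k + 1), C (κ (k - r + 1)) * G κ r * g κ ^ k := by
    intro k _
    rw [G_rec κ k, add_mul, add_mul, mul_assoc X, mul_assoc X, Finset.sum_mul]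
  rw [Finset.sum_congr rfl h]
  rw [Finset.sum_add_distrib, Finset.sum_add_distrib, ← Finset.mul_sum, ← Finset.mul_sum]
  congr 1
  congr 1
  rw [Finset.sum_eq_single 0]
  · simp
  · intro b _ hb
    rw [if_neg hb]
    simp
  · intro h0
    exact absurd (Finset.mem_range.mpr (Nat.succ_pos N)) h0

lemma stepB (N : ℕ) :
    g κ * (∑ k ∈ range (N + 1), G κ (k + 1) * g κ ^ k)
      = Sser κ N - G κ 0 + G κ (N + 1) * g κ ^ (N + 1) := by
  have h1 := Finset.sum_range_succ' (fun k => G κ k * g κ ^ k) (N + 1)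
  have h2 := Finset.sum_range_succ (fun k => G κ k * g κ ^ k) (N + 1)
  unfold Sser
  rw [Finset.mul_sum]
  have h3 : ∀ k ∈ range (N + 1),
      g κ * (G κ (k + 1) * g κ ^ k) = G κ (k + 1) * g κ ^ (k + 1) := by
    intro k _; ring
  rw [Finset.sum_congr rfl h3]
  linear_combination h2 - h1

lemma stepC (N : ℕ) :
    ∃ E2 : PowerSeries ℂ, (X : PowerSeries ℂ) ^ (N + 1) ∣ E2 ∧
      (∑ k ∈ range (N + 1), ∑ r ∈ range (k + 1),
          C (κ (k - r + 1)) * G κ r * g κ ^ k)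
        = Sser κ N * Kser κ N - E2 := by
  refine ⟨∑ r ∈ range (N + 1), ∑ s ∈ Finset.Ico (N + 1 - r) (N + 1),
      C (κ (s + 1)) * G κ r * g κ ^ (r + s), ?_, ?_⟩
  · refine Finset.dvd_sum fun r hr => Finset.dvd_sum fun s hs => ?_
    simp only [mem_range] at hr
    simp only [Finset.mem_Ico] at hs
    have : (X : PowerSeries ℂ) ^ (N + 1) ∣ g κ ^ (r + s) :=
      (X_pow_dvd_g_pow κ (N + 1)).trans (pow_dvd_pow _ (by omega))
    exact this.mul_left _
  · -- reindex the triangular sum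
    have h1 : (∑ k ∈ range (N + 1), ∑ r ∈ range (k + 1),
          C (κ (k - r + 1)) * G κ r * g κ ^ k)
        = ∑ r ∈ range (N + 1), ∑ k ∈ Finset.Ico r (N + 1),
          C (κ (k - r + 1)) * G κ r * g κ ^ k := by
      simp only [Finset.range_eq_Ico]
      rw [← Finset.sum_Ico_Ico_comm 0 (N + 1)
        (fun r k => C (κ (k - r + 1)) * G κ r * g κ ^ k)]
    rw [h1]
    have h2 : Sser κ N * Kser κ N
        = ∑ r ∈ range (N + 1), ∑ s ∈ range (N + 1),
            C (κ (s + 1)) * G κ r * g κ ^ (r + s) := by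
      unfold Sser Kser
      rw [Finset.sum_mul_sum]
      refine Finset.sum_congr rfl fun r _ => Finset.sum_congr rfl fun s _ => ?_
      rw [pow_add]; ring
    rw [h2, ← Finset.sum_sub_distrib]
    refine Finset.sum_congr rfl fun r hr => ?_
    simp only [mem_range] at hr
    have h3 : ∑ k ∈ Finset.Ico r (N + 1), C (κ (k - r + 1)) * G κ r * g κ ^ k
        = ∑ s ∈ range (N + 1 - r), C (κ (s + 1)) * G κ r * g κ ^ (r + s) := by
      rw [Finset.sum_Ico_eq_sum_range]
      refine Finset.sum_congr rfl fun s _ => ?_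
      have hrs : r + s - r + 1 = s + 1 := by omega
      rw [hrs]
    rw [h3, eq_sub_iff_add_eq]
    simp only [Finset.range_eq_Ico]
    exact Finset.sum_Ico_consecutive _ (by omega) (by omega)

lemma key (N : ℕ) :
    (X : PowerSeries ℂ) ^ (N + 2) ∣
      Sser κ N * (g κ - X - X * g κ * Kser κ N) := by
  obtain ⟨E2, hE2dvd, hC⟩ := stepC κ N
  have hA := stepA κ N
  have hB := stepB κ N
  have hg : g κ = X * G κ 0 := rfl
  have hmain : Sser κ N * (g κ - X - X * g κ * Kser κ N)
      = X * (G κ (N + 1) * g κ ^ (N + 1)) - X * g κ * E2 := by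
    linear_combination g κ * hA + X * hB + X * g κ * hC + hg
  rw [hmain]
  refine dvd_sub ?_ ?_
  · have h1 : (X : PowerSeries ℂ) ^ (N + 1) ∣ G κ (N + 1) * g κ ^ (N + 1) :=
      (X_pow_dvd_g_pow κ (N + 1)).mul_left _
    calc (X : PowerSeries ℂ) ^ (N + 2) = X * X ^ (N + 1) := by ring
    _ ∣ X * (G κ (N + 1) * g κ ^ (N + 1)) := mul_dvd_mul_left X h1
  · calc (X : PowerSeries ℂ) ^ (N + 2) = X * X ^ (N + 1) := by ring
    _ ∣ X * g κ * E2 := by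
        rw [mul_assoc]
        exact mul_dvd_mul_left X (hE2dvd.mul_left _)

lemma Sser_unit (N : ℕ) : IsUnit (Sser κ N) := by
  rw [PowerSeries.isUnit_iff_constantCoeff]
  have h0 : constantCoeff (g κ) = 0 := by
    rw [show g κ = X * G κ 0 from rfl, map_mul, constantCoeff_X, zero_mul]
  have h : constantCoeff (Sser κ N) = 1 := by
    unfold Sser
    rw [map_sum]
    rw [Finset.sum_eq_single 0]
    · rw [map_mul, map_pow, h0]
      simp [G, ← coeff_zero_eq_constantCoeff, a_zero]
    · intro b _ hb
      rw [map_mul, map_pow, h0, zero_pow hb, mul_zero]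
    · intro h0'
      exact absurd (Finset.mem_range.mpr (Nat.succ_pos N)) h0'
  rw [h]
  exact isUnit_one

lemma key2 (N : ℕ) :
    (X : PowerSeries ℂ) ^ (N + 2) ∣ (g κ - X - X * g κ * Kser κ N) := by
  obtain ⟨v, hv⟩ := (Sser_unit κ N).exists_left_inv
  obtain ⟨t, ht⟩ := key κ N
  refine ⟨v * t, ?_⟩
  calc g κ - X - X * g κ * Kser κ N
      = v * (Sser κ N * (g κ - X - X * g κ * Kser κ N)) := by
        rw [← mul_assoc, hv, one_mul]
    _ = v * (X ^ (N + 2) * t) := by rw [ht]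
    _ = X ^ (N + 2) * (v * t) := by ring

lemma coeff_G0 (n : ℕ) :
    PowerSeries.coeff n (G κ 0) = (if n = 0 then 1 else 0)
      + ∑ r ∈ range (n + 1), κ (r + 1) * PowerSeries.coeff n (g κ ^ (r + 1)) := by
  have h := key2 κ n
  have hfact : g κ - X - X * g κ * Kser κ n = X * (G κ 0 - 1 - g κ * Kser κ n) := by
    rw [show g κ = X * G κ 0 from rfl]; ring
  rw [hfact] at h
  have h2 : (X : PowerSeries ℂ) ^ (n + 1) ∣ (G κ 0 - 1 - g κ * Kser κ n) := by
    obtain ⟨t, ht⟩ := h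
    refine ⟨t, mul_left_cancel₀ PowerSeries.X_ne_zero ?_⟩
    rw [ht]; ring
  have h3 := (PowerSeries.X_pow_dvd_iff.mp h2) n (lt_add_one n)
  have h4 : coeff n (g κ * Kser κ n)
      = ∑ r ∈ range (n + 1), κ (r + 1) * coeff n (g κ ^ (r + 1)) := by
    have h5 : g κ * Kser κ n = ∑ r ∈ range (n + 1), C (κ (r + 1)) * g κ ^ (r + 1) := by
      unfold Kser
      rw [Finset.mul_sum]
      refine Finset.sum_congr rfl fun r _ => ?_
      rw [pow_succ]; ring
    rw [h5, map_sum]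
    refine Finset.sum_congr rfl fun r _ => coeff_C_mul _ _ _
  rw [map_sub, map_sub, h4, PowerSeries.coeff_one] at h3
  linear_combination h3

end HTaux

theorem hessenberg_toeplitz_cumulants (κ : ℕ → ℂ) :
    ∀ m : ℤ,
      (1 : LaurentSeries ℂ).coeff m =
        (((zL - HahnSeries.C (κ 1)) *
            (HahnSeries.single (1 : ℤ) (1 : ℂ) *
              HahnSeries.ofPowerSeries ℤ ℂ
                (PowerSeries.mk fun n => matPow (hessToep κ) n 0 0))).coeff m) -
          ∑ᶠ j : ℕ, if 2 ≤ j then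
            κ j * (((HahnSeries.single (1 : ℤ) (1 : ℂ) *
              HahnSeries.ofPowerSeries ℤ ℂ
                (PowerSeries.mk fun n => matPow (hessToep κ) n 0 0)) ^ j).coeff m)
            else 0 := by
  intro m
  classical
  set F : PowerSeries ℂ := PowerSeries.mk fun n => matPow (hessToep κ) n 0 0 with hF
  have hFG : F = HTaux.G κ 0 := rfl
  have hgL : HahnSeries.single (1 : ℤ) (1 : ℂ) * HahnSeries.ofPowerSeries ℤ ℂ F
      = HahnSeries.ofPowerSeries ℤ ℂ (HTaux.g κ) := by
    rw [show HTaux.g κ = PowerSeries.X * HTaux.G κ 0 from rfl, map_mul,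
      HahnSeries.ofPowerSeries_X, hFG]
  have hneg : ∀ f : PowerSeries ℂ, m < 0 → (HahnSeries.ofPowerSeries ℤ ℂ f).coeff m = 0 := by
    intro f hm
    rw [HahnSeries.ofPowerSeries_apply]
    apply HahnSeries.embDomain_notin_range
    rintro ⟨n, hn⟩
    simp only [Nat.castOrderEmbedding_apply] at hn
    omega
  have hcoe : ∀ (f : PowerSeries ℂ) (n : ℕ),
      (HahnSeries.ofPowerSeries ℤ ℂ f).coeff (n : ℤ) = PowerSeries.coeff n f :=
    fun f n => HahnSeries.ofPowerSeries_apply_coeff f n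
  have hzg : zL * (HahnSeries.single (1 : ℤ) (1 : ℂ) * HahnSeries.ofPowerSeries ℤ ℂ F)
      = HahnSeries.ofPowerSeries ℤ ℂ (HTaux.G κ 0) := by
    rw [zL, ← mul_assoc, HahnSeries.single_mul_single, one_mul,
      show (-1 : ℤ) + 1 = 0 from by ring, HahnSeries.single_zero_one, one_mul, hFG]
  have hCg : HahnSeries.C (κ 1) * (HahnSeries.single (1 : ℤ) (1 : ℂ) *
        HahnSeries.ofPowerSeries ℤ ℂ F)
      = HahnSeries.ofPowerSeries ℤ ℂ (PowerSeries.C (κ 1) * HTaux.g κ) := by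
    rw [hgL, map_mul, HahnSeries.ofPowerSeries_C]
  have hpow : ∀ j : ℕ, (HahnSeries.single (1 : ℤ) (1 : ℂ) *
        HahnSeries.ofPowerSeries ℤ ℂ F) ^ j
      = HahnSeries.ofPowerSeries ℤ ℂ (HTaux.g κ ^ j) := by
    intro j
    rw [hgL, map_pow]
  rw [sub_mul]
  rcases lt_or_ge m 0 with hm | hm
  · rw [HahnSeries.coeff_sub, hzg, hCg, hneg _ hm, hneg _ hm]
    have hz : ∀ j : ℕ, (if 2 ≤ j then
        κ j * (((HahnSeries.single (1 : ℤ) (1 : ℂ) *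
          HahnSeries.ofPowerSeries ℤ ℂ F) ^ j).coeff m) else 0) = 0 := by
      intro j
      rw [hpow j, hneg _ hm, mul_zero, ite_self]
    rw [finsum_congr hz, finsum_zero]
    rw [HahnSeries.coeff_one, if_neg (by omega)]
    ring
  · obtain ⟨n, rfl⟩ := Int.eq_ofNat_of_zero_le hm
    rw [HahnSeries.coeff_sub, hzg, hCg, hcoe, hcoe]
    have hsupp : (Function.support fun j : ℕ => (if 2 ≤ j then
        κ j * (((HahnSeries.single (1 : ℤ) (1 : ℂ) *
          HahnSeries.ofPowerSeries ℤ ℂ F) ^ j).coeff (n : ℤ)) else 0))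
        ⊆ ↑(Finset.range (n + 2)) := by
      intro j hj
      simp only [Function.mem_support] at hj
      simp only [Finset.coe_range, Set.mem_Iio]
      by_contra hc
      apply hj
      rw [hpow j, hcoe]
      rw [HTaux.coeff_g_pow_eq_zero κ (by omega), mul_zero, ite_self]
    rw [finsum_eq_sum_of_support_subset _ hsupp]
    have hsum : ∀ j ∈ Finset.range (n + 2), (if 2 ≤ j then
        κ j * (((HahnSeries.single (1 : ℤ) (1 : ℂ) *
          HahnSeries.ofPowerSeries ℤ ℂ F) ^ j).coeff (n : ℤ)) else 0)
        = (if 2 ≤ j then κ j * PowerSeries.coeff n (HTaux.g κ ^ j) else 0) := by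
      intro j _
      rw [hpow j, hcoe]
    rw [Finset.sum_congr rfl hsum]
    rw [HTaux.coeff_G0 κ n, PowerSeries.coeff_C_mul]
    have hre : ∑ r ∈ Finset.range (n + 1), κ (r + 1) * PowerSeries.coeff n (HTaux.g κ ^ (r + 1))
        = ∑ j ∈ Finset.range (n + 2),
            (if 1 ≤ j then κ j * PowerSeries.coeff n (HTaux.g κ ^ j) else 0) := by
      rw [Finset.sum_range_succ' (fun j => if 1 ≤ j then
        κ j * PowerSeries.coeff n (HTaux.g κ ^ j) else 0) (n + 1)]
      simp
    rw [hre]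
    have hsplit : ∑ j ∈ Finset.range (n + 2),
          (if 1 ≤ j then κ j * PowerSeries.coeff n (HTaux.g κ ^ j) else 0)
        - ∑ j ∈ Finset.range (n + 2),
          (if 2 ≤ j then κ j * PowerSeries.coeff n (HTaux.g κ ^ j) else 0)
        = κ 1 * PowerSeries.coeff n (HTaux.g κ ^ 1) := by
      rw [← Finset.sum_sub_distrib]
      rw [Finset.sum_eq_single 1]
      · norm_num
      · intro b _ hb
        rcases Nat.lt_or_ge b 1 with h1 | h1
        · rw [if_neg (by omega), if_neg (by omega), sub_zero]
        · rw [if_pos (by omega), if_pos (by omega), sub_self]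
      · intro hc
        exact absurd (Finset.mem_range.mpr (by omega)) hc
    rw [HahnSeries.coeff_one]
    rw [pow_one] at hsplit
    have hn0 : ((n : ℤ) = 0) = (n = 0) := by
      simp [Int.natCast_eq_zero]
    rw [hn0]
    split_ifs with h <;> linear_combination -hsplit
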